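/- arXiv:1412.2976 — 2 statements merged into one kernel-verified Lean document; each statement's English description precedes it below -/
import Mathlib

section
/- Let R be a *-ring in which 2 is invertible, p, q projectors with p - q Moore-Penrose invertible, and H = (p-q)(p-q)†. Then pH = p if and only if (p+q)H = p + q. -/
/-- `b` is a Moore-Penrose inverse of `a`. -/
def IsMP {R : Type*} [Ring R] [StarRing R] (a b : R) : Prop :=
  a * b * a = a ∧ b * a * b = b ∧ star (a * b) = a * b ∧ star (b * a) = b * a

/-- `p` is a projector: `p² = p = p*`. -/
def IsProjector {R : Type*} [Ring R] [StarRing R] (p : R) : Prop :=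
  p * p = p ∧ star p = p

/-- `a` is *-cancellable. -/
def StarCancellable {R : Type*} [Ring R] [StarRing R] (a : R) : Prop :=
  (∀ x : R, star a * a * x = 0 → a * x = 0) ∧ (∀ x : R, x * (a * star a) = 0 → x * a = 0)

lemma isMP_star {R : Type*} [Ring R] [StarRing R] {a b : R} (h : IsMP a b) :
    IsMP (star a) (star b) := by
  obtain ⟨h1, h2, h3, h4⟩ := h
  refine ⟨?_, ?_, ?_, ?_⟩
  · calc star a * star b * star a = star (a * (b * a)) := by rw [← star_mul, ← star_mul]
    _ = star a := by rw [← mul_assoc, h1]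
  · calc star b * star a * star b = star (b * (a * b)) := by rw [← star_mul, ← star_mul]
    _ = star b := by rw [← mul_assoc, h2]
  · rw [← star_mul, star_star, h4]
  · rw [← star_mul, star_star, h3]

lemma isMP_unique {R : Type*} [Ring R] [StarRing R] {a b c : R}
    (hb : IsMP a b) (hc : IsMP a c) : b = c := by
  obtain ⟨b1, b2, b3, b4⟩ := hb
  obtain ⟨c1, c2, c3, c4⟩ := hc
  have hab : a * b = a * c := by
    calc a * b = (a * c * a) * b := by rw [c1]
    _ = (a * c) * (a * b) := by noncomm_ring
    _ = star (a * c) * star (a * b) := by rw [c3, b3]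
    _ = star ((a * b) * (a * c)) := (star_mul _ _).symm
    _ = star ((a * b * a) * c) := by congr 1; noncomm_ring
    _ = star (a * c) := by rw [b1]
    _ = a * c := c3
  have hba : b * a = c * a := by
    calc b * a = b * (a * c * a) := by rw [c1]
    _ = (b * a) * (c * a) := by noncomm_ring
    _ = star (b * a) * star (c * a) := by rw [b4, c4]
    _ = star ((c * a) * (b * a)) := (star_mul _ _).symm
    _ = star (c * (a * b * a)) := by congr 1; noncomm_ring
    _ = star (c * a) := by rw [b1]
    _ = c * a := c4
  calc b = b * a * b := b2.symm
  _ = b * (a * b) := by noncomm_ring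
  _ = b * (a * c) := by rw [hab]
  _ = (b * a) * c := by noncomm_ring
  _ = (c * a) * c := by rw [hba]
  _ = c := c2

theorem stmt15 {R : Type*} [Ring R] [StarRing R] (p q d : R)
    (h2 : IsUnit (2 : R))
    (hp : IsProjector p) (hq : IsProjector q)
    (hd : IsMP (p - q) d) :
    p * ((p - q) * d) = p ↔ (p + q) * ((p - q) * d) = p + q := by
  set e := p - q with he
  have hestar : star e = e := by
    rw [he, star_sub, hp.2, hq.2]
  have hdstar : star d = d := by
    have := isMP_star hd
    rw [hestar] at this
    exact isMP_unique this hd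
  have hcomm : d * e = e * d := by
    have := hd.2.2.1
    rw [star_mul, hdstar, hestar] at this
    exact this
  have hkey : e * (e * d) = e := by
    rw [← hcomm, ← mul_assoc, hd.1]
  have hsub : p * (e * d) - q * (e * d) = p - q := by
    rw [← sub_mul, ← he, hkey]
  constructor
  · intro h
    have hq' : q * (e * d) = q := by
      have h1 := hsub
      rw [h] at h1
      exact sub_right_inj.mp h1
    rw [add_mul, h, hq']
  · intro h
    have h' : p * (e * d) + q * (e * d) = p + q := by rw [← add_mul]; exact h
    have hpp : p * (e * d) + p * (e * d) = p + p := by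
      calc p * (e * d) + p * (e * d)
          = (p * (e * d) + q * (e * d)) + (p * (e * d) - q * (e * d)) := by abel
      _ = (p + q) + (p - q) := by rw [h', hsub]
      _ = p + p := by abel
    have h2' : (2 : R) * (p * (e * d)) = 2 * p := by
      rw [two_mul, two_mul]; exact hpp
    exact h2.mul_left_cancel h2'
end

section
/- Let R be a *-ring and p, q projectors with pq = qp. Then p + q is Moore-Penrose invertible if and only if 1 + pq is Moore-Penrose invertible; in this case (p+q)† = (1+pq)†p + q(1-p) and (1+pq)† = (p+q)†p + 1 - p. -/
section Aux

variable {R : Type*} [Ring R] [StarRing R]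

lemma mp_star {a b : R} (h : IsMP a b) : IsMP (star a) (star b) := by
  obtain ⟨h1, h2, h3, h4⟩ := h
  refine ⟨?_, ?_, ?_, ?_⟩
  · rw [← star_mul, ← star_mul, ← mul_assoc, h1]
  · rw [← star_mul, ← star_mul, ← mul_assoc, h2]
  · rw [← star_mul, star_star, h4]
  · rw [← star_mul, star_star, h3]

lemma mp_unique {a b c : R} (hb : IsMP a b) (hc : IsMP a c) : b = c := by
  obtain ⟨b1, b2, b3, b4⟩ := hb
  obtain ⟨c1, c2, c3, c4⟩ := hc
  have step1 : a * b = a * c := by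
    calc a * b = (a * c * a) * b := by rw [c1]
    _ = (a * c) * (a * b) := by rw [mul_assoc (a*c) a b]
    _ = star (a * c) * star (a * b) := by rw [c3, b3]
    _ = star ((a * b) * (a * c)) := (star_mul _ _).symm
    _ = star (a * c) := by rw [show (a*b)*(a*c) = a*c by rw [← mul_assoc, b1]]
    _ = a * c := c3
  have step2 : b * a = c * a := by
    calc b * a = b * (a * c * a) := by rw [c1]
    _ = (b * a) * (c * a) := by rw [← mul_assoc, ← mul_assoc, mul_assoc (b*a) c a]
    _ = star (b * a) * star (c * a) := by rw [b4, c4]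
    _ = star ((c * a) * (b * a)) := (star_mul _ _).symm
    _ = star (c * a) := by
        rw [show (c*a)*(b*a) = c*a by rw [mul_assoc c a (b*a), ← mul_assoc a b a, b1]]
    _ = c * a := c4
  calc b = b * a * b := b2.symm
  _ = (c * a) * b := by rw [step2]
  _ = c * (a * b) := by rw [mul_assoc]
  _ = c * (a * c) := by rw [step1]
  _ = c * a * c := by rw [mul_assoc]
  _ = c := c2

lemma mp_sa {a y : R} (ha : star a = a) (h : IsMP a y) : star y = y := by
  have h' := mp_star h
  rw [ha] at h'
  exact mp_unique h' h

lemma mp_comm {a y x : R} (ha : star a = a) (h : IsMP a y) (hx : x * a = a * x) :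
    x * y = y * x := by
  have hy : star y = y := mp_sa ha h
  have hay : a * y = y * a := by
    calc a * y = star (a * y) := h.2.2.1.symm
    _ = star y * star a := star_mul _ _
    _ = y * a := by rw [hy, ha]
  have hyy : a * (y * y) = y := by
    calc a * (y * y) = (a * y) * y := (mul_assoc a y y).symm
    _ = (y * a) * y := by rw [hay]
    _ = y := h.2.1
  have hyya : (y * y) * a = y := by
    calc (y * y) * a = y * (y * a) := mul_assoc y y a
    _ = y * (a * y) := by rw [hay]
    _ = y := by rw [← mul_assoc]; exact h.2.1
  have hea : a * (a * y) = a := by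
    calc a * (a * y) = a * (y * a) := by rw [hay]
    _ = (a * y) * a := (mul_assoc a y a).symm
    _ = a := h.1
  have key1 : x * y = (a * y) * (x * y) := by
    have e1 : x * y = a * (x * (y * y)) := by
      calc x * y = x * (a * (y * y)) := by rw [hyy]
      _ = (x * a) * (y * y) := (mul_assoc x a (y*y)).symm
      _ = (a * x) * (y * y) := by rw [hx]
      _ = a * (x * (y * y)) := mul_assoc a x (y*y)
    calc x * y = a * (x * (y * y)) := e1
    _ = ((a * y) * a) * (x * (y * y)) := by rw [h.1]
    _ = (a * y) * (a * (x * (y * y))) := mul_assoc (a*y) a _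
    _ = (a * y) * (x * y) := by rw [← e1]
  have key2 : y * x = (y * x) * (a * y) := by
    have e2 : y * x = ((y * y) * x) * a := by
      calc y * x = ((y * y) * a) * x := by rw [hyya]
      _ = (y * y) * (a * x) := mul_assoc (y*y) a x
      _ = (y * y) * (x * a) := by rw [hx]
      _ = ((y * y) * x) * a := (mul_assoc (y*y) x a).symm
    calc y * x = ((y * y) * x) * a := e2
    _ = ((y * y) * x) * (a * (a * y)) := by rw [hea]
    _ = (((y * y) * x) * a) * (a * y) := (mul_assoc _ a (a*y)).symm
    _ = (y * x) * (a * y) := by rw [← e2]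
  have bridge : (a * y) * (x * y) = (y * x) * (a * y) := by
    calc (a * y) * (x * y) = (y * a) * (x * y) := by rw [hay]
    _ = y * (a * (x * y)) := mul_assoc y a (x*y)
    _ = y * ((a * x) * y) := by rw [mul_assoc a x y]
    _ = y * ((x * a) * y) := by rw [hx]
    _ = y * (x * (a * y)) := by rw [mul_assoc x a y]
    _ = (y * x) * (a * y) := (mul_assoc y x (a*y)).symm
  rw [key1, bridge, ← key2]

end Aux

set_option maxHeartbeats 1000000 in
theorem stmt16 {R : Type*} [Ring R] [StarRing R] (p q : R)
    (hp : IsProjector p) (hq : IsProjector q)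
    (hcomm : p * q = q * p) :
    ((∃ x, IsMP (p + q) x) ↔ (∃ x, IsMP (1 + p * q) x)) ∧
    (∀ y, IsMP (1 + p * q) y → IsMP (p + q) (y * p + q * (1 - p))) ∧
    (∀ x, IsMP (p + q) x → IsMP (1 + p * q) (x * p + 1 - p)) := by
  obtain ⟨hp1, hp2⟩ := hp
  obtain ⟨hq1, hq2⟩ := hq
  have has : star (1 + p * q) = 1 + p * q := by
    rw [star_add, star_one, star_mul, hp2, hq2, ← hcomm]
  have hss : star (p + q) = p + q := by rw [star_add, hp2, hq2]
  have hspq : star (p * q) = q * p := by rw [star_mul, hp2, hq2]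
  have hpa : p * (1 + p * q) = (1 + p * q) * p := by
    rw [mul_add, add_mul, mul_one, one_mul, ← mul_assoc, hp1, mul_assoc, ← hcomm,
      ← mul_assoc, hp1]
  have hqa : q * (1 + p * q) = (1 + p * q) * q := by
    rw [mul_add, add_mul, mul_one, one_mul, ← mul_assoc, ← hcomm]
  have hps : p * (p + q) = (p + q) * p := by
    rw [mul_add, add_mul, hp1, hcomm]
  have hqs : q * (p + q) = (p + q) * q := by
    rw [mul_add, add_mul, hq1, hcomm]
  have part2 : ∀ y, IsMP (1 + p * q) y → IsMP (p + q) (y * p + q * (1 - p)) := by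
    intro y h
    have hpy : p * y = y * p := mp_comm has h hpa
    have hqy : q * y = y * q := mp_comm has h hqa
    obtain ⟨h1, h2, h3, h4⟩ := h
    have hc3 : ∀ u ∈ ({p, q, y} : Set R), ∀ z ∈ ({p, q, y} : Set R), u * z = z * u := by
      rintro u hu z hz
      simp only [Set.mem_insert_iff, Set.mem_singleton_iff] at hu hz
      rcases hu with rfl | rfl | rfl <;> rcases hz with rfl | rfl | rfl
      · rfl
      · exact hcomm
      · exact hpy
      · exact hcomm.symm
      · rfl
      · exact hqy
      · exact hpy.symm
      · exact hqy.symm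
      · rfl
    set T := Subring.closure ({p, q, y} : Set R) with hT
    have hpm : p ∈ T := Subring.subset_closure (by simp)
    have hqm : q ∈ T := Subring.subset_closure (by simp)
    have hym : y ∈ T := Subring.subset_closure (by simp)
    set P : T := ⟨p, hpm⟩ with hP
    set Q : T := ⟨q, hqm⟩ with hQ
    set Y : T := ⟨y, hym⟩ with hY
    have HP : P * P = P := by apply Subtype.ext; push_cast; exact hp1
    have HQ : Q * Q = Q := by apply Subtype.ext; push_cast; exact hq1
    have H1 : (1 + P * Q) * Y * (1 + P * Q) = 1 + P * Q := by
      apply Subtype.ext; push_cast; exact h1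
    have H2 : Y * (1 + P * Q) * Y = Y := by
      apply Subtype.ext; push_cast; exact h2
    have G1 : (p + q) * (y * p + q * (1 - p)) * (p + q) = p + q := by
      have key : (P + Q) * (Y * P + Q * (1 - P)) * (P + Q) = P + Q := by
        letI : CommRing T := Subring.closureCommRingOfComm hc3
        linear_combination (Y + Q - 2*Q*Q - Q*Q*Y + P*Y - P*Q - P*Q*Q*Y) * HP
          + (1 + Q - P - P*Q) * HQ + P * H1
      have := congrArg Subtype.val key
      push_cast at this
      exact this
    have G2 : (y * p + q * (1 - p)) * (p + q) * (y * p + q * (1 - p))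
        = y * p + q * (1 - p) := by
      have key : (Y * P + Q * (1 - P)) * (P + Q) * (Y * P + Q * (1 - P))
          = Y * P + Q * (1 - P) := by
        letI : CommRing T := Subring.closureCommRingOfComm hc3
        linear_combination (Y*Y - Q*Q - 2*Q*Q*Y + Q*Q*Q + P*Y*Y - 2*P*Q*Y + P*Q*Q) * HP
          + (1 + Q - P - P*Q) * HQ + P * H2
      have := congrArg Subtype.val key
      push_cast at this
      exact this
    have G3 : (p + q) * (y * p + q * (1 - p)) = (1 + p * q) * y * p + (q - p * q) := by
      have key : (P + Q) * (Y * P + Q * (1 - P)) = (1 + P * Q) * Y * P + (Q - P * Q) := by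
        letI : CommRing T := Subring.closureCommRingOfComm hc3
        linear_combination (Y - Q - Q*Y) * HP + (1 - P) * HQ
      have := congrArg Subtype.val key
      push_cast at this
      exact this
    have Gc : p * ((1 + p * q) * y) = (1 + p * q) * y * p := by
      have key : P * ((1 + P * Q) * Y) = (1 + P * Q) * Y * P := by
        letI : CommRing T := Subring.closureCommRingOfComm hc3
        ring
      have := congrArg Subtype.val key
      push_cast at this
      exact this
    have Gxs : (y * p + q * (1 - p)) * (p + q) = (p + q) * (y * p + q * (1 - p)) := by
      have key : (Y * P + Q * (1 - P)) * (P + Q) = (P + Q) * (Y * P + Q * (1 - P)) := by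
        letI : CommRing T := Subring.closureCommRingOfComm hc3
        ring
      have := congrArg Subtype.val key
      push_cast at this
      exact this
    have G3star : star ((p + q) * (y * p + q * (1 - p)))
        = (p + q) * (y * p + q * (1 - p)) := by
      rw [G3, star_add, star_mul, star_sub, hp2, hq2, hspq, h3, Gc, ← hcomm]
    refine ⟨G1, G2, G3star, ?_⟩
    rw [Gxs]
    exact G3star
  have part3 : ∀ x, IsMP (p + q) x → IsMP (1 + p * q) (x * p + 1 - p) := by
    intro x h
    have hpx : p * x = x * p := mp_comm hss h hps
    have hqx : q * x = x * q := mp_comm hss h hqs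
    obtain ⟨h1, h2, h3, h4⟩ := h
    have hc3 : ∀ u ∈ ({p, q, x} : Set R), ∀ z ∈ ({p, q, x} : Set R), u * z = z * u := by
      rintro u hu z hz
      simp only [Set.mem_insert_iff, Set.mem_singleton_iff] at hu hz
      rcases hu with rfl | rfl | rfl <;> rcases hz with rfl | rfl | rfl
      · rfl
      · exact hcomm
      · exact hpx
      · exact hcomm.symm
      · rfl
      · exact hqx
      · exact hpx.symm
      · exact hqx.symm
      · rfl
    set T := Subring.closure ({p, q, x} : Set R) with hT
    have hpm : p ∈ T := Subring.subset_closure (by simp)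
    have hqm : q ∈ T := Subring.subset_closure (by simp)
    have hxm : x ∈ T := Subring.subset_closure (by simp)
    set P : T := ⟨p, hpm⟩ with hP
    set Q : T := ⟨q, hqm⟩ with hQ
    set X : T := ⟨x, hxm⟩ with hX
    have HP : P * P = P := by apply Subtype.ext; push_cast; exact hp1
    have HQ : Q * Q = Q := by apply Subtype.ext; push_cast; exact hq1
    have H1 : (P + Q) * X * (P + Q) = P + Q := by
      apply Subtype.ext; push_cast; exact h1
    have H2 : X * (P + Q) * X = X := by
      apply Subtype.ext; push_cast; exact h2
    have G3T : (1 + P * Q) * (X * P + 1 - P) = (P + Q) * X * P + 1 - P := by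
      letI : CommRing T := Subring.closureCommRingOfComm hc3
      linear_combination (- X - Q + Q*X) * HP
    have G1 : (1 + p * q) * (x * p + 1 - p) * (1 + p * q) = 1 + p * q := by
      have key : (1 + P * Q) * (X * P + 1 - P) * (1 + P * Q) = 1 + P * Q := by
        letI : CommRing T := Subring.closureCommRingOfComm hc3
        linear_combination (1 - X - 2*Q + Q*Q*X - P*X - P*Q*Q + P*Q*Q*X) * HP + P * H1
      have := congrArg Subtype.val key
      push_cast at this
      exact this
    have G2 : (x * p + 1 - p) * (1 + p * q) * (x * p + 1 - p) = x * p + 1 - p := by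
      have key : (X * P + 1 - P) * (1 + P * Q) * (X * P + 1 - P) = X * P + 1 - P := by
        letI : CommRing T := Subring.closureCommRingOfComm hc3
        have step : (X * P + 1 - P) * ((P + Q) * X * P + 1 - P) = X * P + 1 - P := by
          linear_combination (1 - X - Q*X + Q*X*X - P*X + P*X*X) * HP + P * H2
        calc (X * P + 1 - P) * (1 + P * Q) * (X * P + 1 - P)
            = (X * P + 1 - P) * ((1 + P * Q) * (X * P + 1 - P)) := by ring
          _ = (X * P + 1 - P) * ((P + Q) * X * P + 1 - P) := by rw [G3T]
          _ = X * P + 1 - P := step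
      have := congrArg Subtype.val key
      push_cast at this
      exact this
    have G3 : (1 + p * q) * (x * p + 1 - p) = (p + q) * x * p + 1 - p := by
      have := congrArg Subtype.val G3T
      push_cast at this
      exact this
    have Gc : p * ((p + q) * x) = (p + q) * x * p := by
      have key : P * ((P + Q) * X) = (P + Q) * X * P := by
        letI : CommRing T := Subring.closureCommRingOfComm hc3
        ring
      have := congrArg Subtype.val key
      push_cast at this
      exact this
    have Gxs : (x * p + 1 - p) * (1 + p * q) = (1 + p * q) * (x * p + 1 - p) := by
      have key : (X * P + 1 - P) * (1 + P * Q) = (1 + P * Q) * (X * P + 1 - P) := by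
        letI : CommRing T := Subring.closureCommRingOfComm hc3
        ring
      have := congrArg Subtype.val key
      push_cast at this
      exact this
    have G3star : star ((1 + p * q) * (x * p + 1 - p)) = (1 + p * q) * (x * p + 1 - p) := by
      rw [G3, star_sub, star_add, star_mul, star_one, hp2, h3, Gc]
    refine ⟨G1, G2, G3star, ?_⟩
    rw [Gxs]
    exact G3star
  refine ⟨⟨fun ⟨x, hx⟩ => ⟨x * p + 1 - p, part3 x hx⟩,
    fun ⟨y, hyy⟩ => ⟨y * p + q * (1 - p), part2 y hyy⟩⟩, part2, part3⟩
end
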